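/- Let 𝒯 = {𝒯⁽¹⁾,…,𝒯⁽ᵏ⁾} be a set of k rooted binary phylogenetic trees, each with at most n leaves and no internal node of degree two. For each integer r with 0 ≤ r ≤ k, the number of cut-subforests 𝒜 of 𝒯 such that exactly r of the cut-subtrees 𝒜⁽ⁱ⁾ have roots that are internal nodes of 𝒯⁽ⁱ⁾ is at most C(k,r)·(n−1)^r·(n+1)^{k−r}, and each such cut-subforest has at most 4^r·2^{k−r} bipartites. -/

import Mathlib

/-- Rooted, unordered, leaf-labelled trees:
a tree is a single labelled leaf, or an (internal) root node with a list of subtrees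
attached to it.  Being unordered, such trees are considered up to the
isomorphism `PTree.Iso` below.  The empty tree is represented by `none` in
`Option (PTree α)`. -/
inductive PTree (α : Type) : Type where
  | leaf : α → PTree α
  | node : List (PTree α) → PTree α

namespace PTree

variable {α : Type} [DecidableEq α]

theorem sizeOf_lt_of_mem {α : Type} {c : PTree α} {cs : List (PTree α)}
    (h : c ∈ cs) : sizeOf c < sizeOf (PTree.node cs) := by
  have := List.sizeOf_lt_of_mem h
  simp only [node.sizeOf_spec]; omega

/-- `Subtree s t` : `s` is the complete subtree rooted at some node of `t`. -/
inductive Subtree : PTree α → PTree α → Prop where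
  | refl (t : PTree α) : Subtree t t
  | child {s c : PTree α} {cs : List (PTree α)} :
      c ∈ cs → Subtree s c → Subtree s (node cs)

/-- The list of leaf labels of a tree. -/
def labelList : PTree α → List α
  | leaf a => [a]
  | node cs => cs.attach.flatMap (fun c => labelList c.1)
decreasing_by exact sizeOf_lt_of_mem c.2

/-- The set `L(T)` of leaf labels of a tree. -/
def labels (t : PTree α) : Finset α := t.labelList.toFinset

/-- The size of a tree: the number of its leaves. -/
def treeSize (t : PTree α) : ℕ := t.labels.card

/-- The label set of a possibly empty tree. -/
def olabels : Option (PTree α) → Finset α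
  | none => ∅
  | some t => t.labels

/-- Connecting a list of trees by a common root.  The empty list yields the
empty tree and a single tree yields that tree itself (no degree-two node is
created). -/
def connect : List (PTree α) → Option (PTree α)
  | [] => none
  | [t] => some t
  | ts => some (node ts)

/-- The restriction `T|S` of `T` to a label set `S`: all leaves with labels
outside `S` are removed and all internal nodes of degree two are suppressed. -/
def restrict (S : Finset α) : PTree α → Option (PTree α)
  | leaf a => if a ∈ S then some (leaf a) else none
  | node cs => connect ((cs.attach.map (fun c => restrict S c.1)).reduceOption)
decreasing_by exact sizeOf_lt_of_mem c.2

/-- Restriction of a possibly empty tree. -/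
def orestrict (S : Finset α) (t : Option (PTree α)) : Option (PTree α) :=
  t.bind (restrict S)

/-- Isomorphism (equality) of unordered leaf-labelled trees: equality of trees
up to reordering of the children of each node. -/
inductive Iso : PTree α → PTree α → Prop where
  | leaf (a : α) : Iso (leaf a) (leaf a)
  | node {cs ds ds' : List (PTree α)} :
      List.Forall₂ Iso cs ds' → ds'.Perm ds → Iso (node cs) (node ds)

/-- One edge contraction: the edge between a node and one of its (internal)
children is contracted, merging the child into the parent. -/
inductive Contract : PTree α → PTree α → Prop where
  | top (l r ds : List (PTree α)) :
      Contract (node (l ++ node ds :: r)) (node (l ++ ds ++ r))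
  | child {c c' : PTree α} (l r : List (PTree α)) :
      Contract c c' → Contract (node (l ++ c :: r)) (node (l ++ c' :: r))

/-- `T` refines `T'` (written `T ⊵ T'`): `T'` can be obtained (as an
unordered tree) by contracting some edges of `T`. -/
def Refines (t t' : PTree α) : Prop :=
  ∃ u, Relation.ReflTransGen Contract t u ∧ Iso u t'

/-- Refinement of possibly empty trees. -/
def ORefines : Option (PTree α) → Option (PTree α) → Prop
  | none, none => True
  | some a, some b => Refines a b
  | _, _ => False

/-- Isomorphism (equality) of possibly empty unordered trees. -/
def OIso : Option (PTree α) → Option (PTree α) → Prop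
  | none, none => True
  | some a, some b => Iso a b
  | _, _ => False

/-- A possibly empty tree is (empty or) a complete subtree of `T`. -/
def OSubtree (T : PTree α) : Option (PTree α) → Prop
  | none => True
  | some t => Subtree t T

/-- No internal node of degree two (after the usual suppression convention):
every internal node of the rooted tree has at least two children. -/
def NoUnaryNodes (T : PTree α) : Prop :=
  ∀ cs : List (PTree α), Subtree (node cs) T → 2 ≤ cs.length

/-- Every node of the rooted tree has degree at most `D` (the degree of the
root is its number of children; the degree of any other internal node is its
number of children plus one). -/
def DegLE (D : ℕ) (T : PTree α) : Prop :=
  (∀ cs : List (PTree α), T = node cs → cs.length ≤ D) ∧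
  (∀ cs : List (PTree α), Subtree (node cs) T → node cs ≠ T → cs.length + 1 ≤ D)

/-- A rooted tree is binary if every internal node has exactly two children. -/
def Binary (T : PTree α) : Prop :=
  ∀ cs : List (PTree α), Subtree (node cs) T → cs.length = 2

/-- A cut-subtree of `T`: the empty tree, or the tree obtained by selecting
some (at least one) of the subtrees attached to an internal node of `T` and
connecting those subtrees by a common root. -/
def IsCutSubtree (T : PTree α) (a : Option (PTree α)) : Prop :=
  a = none ∨ ∃ cs sel : List (PTree α),
    Subtree (node cs) T ∧ sel.Sublist cs ∧ sel ≠ [] ∧ a = connect sel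

variable {k : ℕ}

/-- A cut-subforest of `𝒯`: each component is a cut-subtree of the
corresponding tree, and at least one component is nonempty. -/
def IsCutSubforest (𝒯 : Fin k → PTree α) (A : Fin k → Option (PTree α)) : Prop :=
  (∀ i, IsCutSubtree (𝒯 i) (A i)) ∧ ∃ i, A i ≠ none

/-- A sub-forest of `𝒯`: each component is the empty tree or a complete
subtree rooted at some node of the corresponding tree, and at least one
component is nonempty. -/
def IsSubForest (𝒯 : Fin k → PTree α) (A : Fin k → Option (PTree α)) : Prop :=
  (∀ i, OSubtree (𝒯 i) (A i)) ∧ ∃ i, A i ≠ none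

/-- The set of all labels occurring in the trees of `𝒯`. -/
def allLabels (𝒯 : Fin k → PTree α) : Finset α :=
  Finset.univ.biUnion fun i => (𝒯 i).labels

/-- A (cut-sub)forest is terminal if each component is the empty tree or a
single leaf of the corresponding tree. -/
def IsTerminal (𝒯 : Fin k → PTree α) (A : Fin k → Option (PTree α)) : Prop :=
  ∀ i, A i = none ∨ ∃ a : α, A i = some (leaf a) ∧ Subtree (leaf a) (𝒯 i)

/-- `Λ(𝒜) = { l ∈ ⋃_j L(𝒜⁽ʲ⁾) ∣ ∀ i, l ∉ L(𝒯⁽ⁱ⁾) − L(𝒜⁽ⁱ⁾) }`. -/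
def lambdaSet (𝒯 : Fin k → PTree α) (A : Fin k → Option (PTree α)) : Finset α :=
  (Finset.univ.biUnion fun j => olabels (A j)).filter
    fun l => ∀ i, l ∉ (𝒯 i).labels \ olabels (A i)

/-- `Y` is a compatible supertree of the forest `A`:
`Y|L(A⁽ⁱ⁾) ⊵ A⁽ⁱ⁾|L(Y)` for every `i`. -/
def IsCompatibleSupertree (A : Fin k → Option (PTree α)) (Y : PTree α) : Prop :=
  ∀ i, ORefines (restrict (olabels (A i)) Y) (orestrict Y.labels (A i))

/-- `X` is an agreement supertree of the forest `A`:
`X|L(A⁽ⁱ⁾) = A⁽ⁱ⁾|L(X)` (as unordered trees) for every `i`. -/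
def IsAgreementSupertree (A : Fin k → Option (PTree α)) (X : PTree α) : Prop :=
  ∀ i, OIso (restrict (olabels (A i)) X) (orestrict X.labels (A i))

/-- An embedded supertree of a cut-subforest `A` of `𝒯`: a distinctly
leaf-labelled compatible supertree `Y` of `A`, with leaves labelled by labels
of `𝒯`, such that `L(Y) ∩ L(𝒯⁽ⁱ⁾) ⊆ L(A⁽ⁱ⁾)` for all `i`. -/
def IsEmbeddedSupertree (𝒯 : Fin k → PTree α) (A : Fin k → Option (PTree α))
    (Y : PTree α) : Prop :=
  Y.labelList.Nodup ∧ Y.labels ⊆ allLabels 𝒯 ∧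
  IsCompatibleSupertree A Y ∧
  ∀ i, Y.labels ∩ (𝒯 i).labels ⊆ olabels (A i)

/-- An enclosed supertree of a sub-forest `A` of `𝒯`: a distinctly
leaf-labelled agreement supertree `X` of `A`, with leaves labelled by labels
of `𝒯`, such that `L(X) ∩ L(𝒯⁽ⁱ⁾) ⊆ L(A⁽ⁱ⁾)` for all `i`. -/
def IsEnclosedSupertree (𝒯 : Fin k → PTree α) (A : Fin k → Option (PTree α))
    (X : PTree α) : Prop :=
  X.labelList.Nodup ∧ X.labels ⊆ allLabels 𝒯 ∧
  IsAgreementSupertree A X ∧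
  ∀ i, X.labels ∩ (𝒯 i).labels ⊆ olabels (A i)

/-- `mcsp 𝒯 A` : the maximum size of an embedded supertree of `A`. -/
noncomputable def mcsp (𝒯 : Fin k → PTree α) (A : Fin k → Option (PTree α)) : ℕ :=
  sSup {m : ℕ | ∃ Y : PTree α, IsEmbeddedSupertree 𝒯 A Y ∧ m = Y.treeSize}

/-- `masp 𝒯 A` : the maximum size of an enclosed supertree of `A`. -/
noncomputable def masp (𝒯 : Fin k → PTree α) (A : Fin k → Option (PTree α)) : ℕ :=
  sSup {m : ℕ | ∃ X : PTree α, IsEnclosedSupertree 𝒯 A X ∧ m = X.treeSize}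

end PTree

/-- `ListSplit s l r` : the list `s` is partitioned into the two
(complementary) sublists `l` and `r`. -/
inductive ListSplit {β : Type} : List β → List β → List β → Prop where
  | nil : ListSplit [] [] []
  | left {s l r : List β} (x : β) : ListSplit s l r → ListSplit (x :: s) (x :: l) r
  | right {s l r : List β} (x : β) : ListSplit s l r → ListSplit (x :: s) l (x :: r)

namespace PTree

variable {α : Type} [DecidableEq α] {k : ℕ}

/-- `(AL, AR)` is a bipartite of the forest `A`: for every `i` the set of
subtrees attached to the root of `A⁽ⁱ⁾` is partitioned into two sets, each of
which is connected by a common root to form `AL⁽ⁱ⁾` resp. `AR⁽ⁱ⁾` (an empty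
set of subtrees yielding the empty tree). -/
def IsBipartite (A AL AR : Fin k → Option (PTree α)) : Prop :=
  ∀ i, ∃ s sL sR : List (PTree α),
    A i = connect s ∧ ListSplit s sL sR ∧ AL i = connect sL ∧ AR i = connect sR

/-- Condition, at one component, for `(b 1, …, b d)` to decompose `a`:
either exactly one `b j` is isomorphic to `a` and the others are empty, or at
least two of the `b j` are nonempty and the nonempty ones are isomorphic to
pairwise distinct subtrees attached to the root of `a`. -/
def DecompAt {d : ℕ} (a : Option (PTree α)) (b : Fin d → Option (PTree α)) : Prop :=
  (∃ j, OIso (b j) a ∧ ∀ j', j' ≠ j → b j' = none) ∨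
  (∃ cs : List (PTree α), a = some (node cs) ∧
    2 ≤ (Finset.univ.filter fun j => (b j).isSome).card ∧
    ∃ idx : Fin d → Option (Fin cs.length),
      (∀ j, b j = none ↔ idx j = none) ∧
      (∀ j t m, b j = some t → idx j = some m → Iso t (cs.get m)) ∧
      (∀ j j' m, idx j = some m → idx j' = some m → j = j'))

/-- `(B 1, …, B d)` is a decomposition of the forest `A` (each `B j` being a
possibly empty sub-forest of `𝒯`). -/
def IsDecomposition (𝒯 : Fin k → PTree α) (A : Fin k → Option (PTree α))
    (d : ℕ) (B : Fin d → Fin k → Option (PTree α)) : Prop :=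
  2 ≤ d ∧ (∀ j i, OSubtree (𝒯 i) (B j i)) ∧ ∀ i, DecompAt (A i) fun j => B j i

/-- The root of the (nonempty) cut-subtree `a` is an internal node of `T`,
i.e. `a` is the complete subtree of `T` rooted at an internal node of `T`. -/
def InternalRooted (T : PTree α) : Option (PTree α) → Prop
  | none => False
  | some t => (∃ cs : List (PTree α), t = node cs) ∧ Subtree t T

/-- One rerooting step: the root is moved to an adjacent internal node. -/
inductive Reroot1 : PTree α → PTree α → Prop where
  | step (l r ds : List (PTree α)) :
      Reroot1 (node (l ++ node ds :: r)) (node (ds ++ [node (l ++ r)]))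

/-- `F` is a rooted variant of the unrooted tree (represented by) `T`:
`F` is obtained by rooting `T` at some internal node. -/
def RootedVariant (T F : PTree α) : Prop := Relation.ReflTransGen Reroot1 T F

/-- A maximal subtree of the unrooted tree (represented by) `T`: a rooted tree
obtained by first rooting `T` at some internal node and then removing at most
one nontrivial subtree attached to that node. -/
def IsMaximalSubtree (T A : PTree α) : Prop :=
  ∃ cs : List (PTree α), RootedVariant T (node cs) ∧
    (A = node cs ∨ ∃ l r ds : List (PTree α), cs = l ++ node ds :: r ∧ A = node (l ++ r))

/-- `T` (a rooted tree, rooted at an internal node) represents an unrooted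
tree without vertices of degree two: the root has at least three neighbours
and every other internal vertex has at least three neighbours as well. -/
def IsUnrootedRep (T : PTree α) : Prop :=
  (∃ cs : List (PTree α), T = node cs ∧ 3 ≤ cs.length) ∧
  ∀ cs : List (PTree α), Subtree (node cs) T → node cs ≠ T → 2 ≤ cs.length

end PTree


namespace PTree

variable {α : Type}

theorem subtree_trans {s t u : PTree α} (h1 : Subtree s t) (h2 : Subtree t u) : Subtree s u := by
  induction h2 with
  | refl => exact h1
  | child hm _ ih => exact Subtree.child hm ih

mutual
def nodeSubList : PTree α → List (PTree α)
  | leaf _ => []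
  | node cs => node cs :: nodeSubListL cs
def nodeSubListL : List (PTree α) → List (PTree α)
  | [] => []
  | c :: cs => nodeSubList c ++ nodeSubListL cs
end

mutual
def leafSubList : PTree α → List (PTree α)
  | leaf a => [leaf a]
  | node cs => leafSubListL cs
def leafSubListL : List (PTree α) → List (PTree α)
  | [] => []
  | c :: cs => leafSubList c ++ leafSubListL cs
end

theorem mem_nodeSubListL {x c : PTree α} {cs : List (PTree α)} (hc : c ∈ cs)
    (hx : x ∈ nodeSubList c) : x ∈ nodeSubListL cs := by
  induction cs with
  | nil => cases hc
  | cons d ds ih =>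
    simp only [nodeSubListL, List.mem_append]
    rcases List.mem_cons.1 hc with h | h
    · exact Or.inl (h ▸ hx)
    · exact Or.inr (ih h)

theorem mem_nodeSubList {t T : PTree α} (h : Subtree t T) (ht : ∃ ds, t = node ds) :
    t ∈ nodeSubList T := by
  induction h with
  | refl => obtain ⟨ds, rfl⟩ := ht; simp [nodeSubList]
  | child hm _ ih =>
    simp only [nodeSubList]
    exact List.mem_cons_of_mem _ (mem_nodeSubListL hm ih)

theorem mem_leafSubListL {x c : PTree α} {cs : List (PTree α)} (hc : c ∈ cs)
    (hx : x ∈ leafSubList c) : x ∈ leafSubListL cs := by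
  induction cs with
  | nil => cases hc
  | cons d ds ih =>
    simp only [leafSubListL, List.mem_append]
    rcases List.mem_cons.1 hc with h | h
    · exact Or.inl (h ▸ hx)
    · exact Or.inr (ih h)

theorem mem_leafSubList {t T : PTree α} (h : Subtree t T) (ht : ∃ a, t = leaf a) :
    t ∈ leafSubList T := by
  induction h with
  | refl => obtain ⟨a, rfl⟩ := ht; simp [leafSubList]
  | child hm _ ih =>
    simp only [leafSubList]
    exact mem_leafSubListL hm ih

theorem labelList_node (cs : List (PTree α)) : labelList (node cs) = cs.flatMap labelList := by
  rw [labelList]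
  conv_rhs => rw [← List.attach_map_subtype_val cs]
  rw [List.flatMap_map]

mutual
theorem leafSubList_length : ∀ t : PTree α, (leafSubList t).length = (labelList t).length
  | leaf a => by simp [leafSubList, labelList]
  | node cs => by
    rw [labelList_node]
    simp only [leafSubList]
    exact leafSubListL_length cs
theorem leafSubListL_length :
    ∀ cs : List (PTree α), (leafSubListL cs).length = (cs.flatMap labelList).length
  | [] => by simp [leafSubListL]
  | c :: cs => by
    simp only [leafSubListL, List.flatMap_cons, List.length_append]
    rw [leafSubList_length c, leafSubListL_length cs]
end

theorem binary_child {c : PTree α} {cs} (hb : Binary (node cs)) (hc : c ∈ cs) : Binary c :=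
  fun ds hds => hb ds (Subtree.child hc hds)

mutual
theorem nodeSubList_length : ∀ t : PTree α, Binary t →
    (nodeSubList t).length + 1 ≤ (labelList t).length
  | leaf a, _ => by simp [nodeSubList, labelList]
  | node cs, hb => by
    have h2 : cs.length = 2 := hb cs (Subtree.refl _)
    have h3 := nodeSubListL_length cs (fun c hc => binary_child hb hc)
    rw [labelList_node]
    simp only [nodeSubList, List.length_cons]
    omega
theorem nodeSubListL_length : ∀ cs : List (PTree α), (∀ c ∈ cs, Binary c) →
    (nodeSubListL cs).length + cs.length ≤ (cs.flatMap labelList).length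
  | [], _ => by simp [nodeSubListL]
  | c :: cs, hb => by
    have h1 := nodeSubList_length c (hb c List.mem_cons_self)
    have h2 := nodeSubListL_length cs (fun d hd => hb d (List.mem_cons_of_mem _ hd))
    simp only [nodeSubListL, List.flatMap_cons, List.length_append, List.length_cons]
    omega
end

theorem cut_subtree_some {T t : PTree α} (hb : Binary T)
    (h : IsCutSubtree T (some t)) : Subtree t T := by
  rcases h with h | ⟨cs, sel, hsub, hsl, hne, heq⟩
  · exact absurd h (by simp)
  match sel, hne, heq with
  | [c], _, heq =>
    have hc : c ∈ cs := hsl.subset (List.mem_singleton_self c)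
    have ht : t = c := by simpa [connect] using heq
    exact ht ▸ subtree_trans (Subtree.child hc (Subtree.refl c)) hsub
  | c :: d :: l, _, heq =>
    have ht : t = node (c :: d :: l) := by simpa [connect] using heq
    have hlen2 : cs.length = 2 := hb cs hsub
    have hle := hsl.length_le
    have hlen : (c :: d :: l).length = cs.length := by
      simp only [List.length_cons] at hle ⊢; omega
    have hsel : c :: d :: l = cs := hsl.eq_of_length hlen
    rw [ht, hsel]
    exact hsub

open Classical in
/-- Candidate values for internal-rooted components. -/
noncomputable def intCand (T : PTree α) : Finset (Option (PTree α)) :=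
  ((nodeSubList T).map some).toFinset

open Classical in
/-- Candidate values for nonInternal-rooted components. -/
noncomputable def extCand (T : PTree α) : Finset (Option (PTree α)) :=
  insert none (((leafSubList T).map some).toFinset)

/-- Candidate (left,right) pairs for a bipartite, at one component. -/
def pairList : Option (PTree α) → List (Option (PTree α) × Option (PTree α))
  | none => [(none, none)]
  | some t => [(some t, none), (none, some t)] ++
      (match t with
        | node [c1, c2] => [(some c1, some c2), (some c2, some c1)]
        | _ => [])

theorem pairList_length_le (a : Option (PTree α)) : (pairList a).length ≤ 4 := by
  match a with
  | none => simp [pairList]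
  | some (leaf b) => simp [pairList]
  | some (node []) => simp [pairList]
  | some (node [c]) => simp [pairList]
  | some (node [c1, c2]) => simp [pairList]
  | some (node (c1 :: c2 :: c3 :: l)) => simp [pairList]

theorem bipartite_mem {a al ar : Option (PTree α)}
    (hbl : ∀ cs, a = some (node cs) → cs.length = 2)
    (h : ∃ s sL sR : List (PTree α),
      a = connect s ∧ ListSplit s sL sR ∧ al = connect sL ∧ ar = connect sR) :
    (al, ar) ∈ pairList a := by
  obtain ⟨s, sL, sR, ha, hsp, hl, hr⟩ := h
  match s, hsp with
  | [], hsp =>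
    cases hsp
    simp only [connect] at ha hl hr
    subst ha; subst hl; subst hr
    simp [pairList]
  | [u], hsp =>
    have ha' : a = some u := ha
    rcases hsp with _ | ⟨_, hsp'⟩ | ⟨_, hsp'⟩
    · cases hsp'
      simp only [connect] at hl hr
      subst ha'; subst hl; subst hr
      simp [pairList]
    · cases hsp'
      simp only [connect] at hl hr
      subst ha'; subst hl; subst hr
      simp [pairList]
  | u :: v :: l, hsp =>
    have ha' : a = some (node (u :: v :: l)) := ha
    have hlen : (u :: v :: l).length = 2 := hbl _ ha'
    have hl0 : l = [] := by simp at hlen; simp [hlen]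
    subst hl0
    subst ha'
    rcases hsp with _ | ⟨_, hsp'⟩ | ⟨_, hsp'⟩
    · rcases hsp' with _ | ⟨_, hsp''⟩ | ⟨_, hsp''⟩
      · cases hsp''
        simp only [connect] at hl hr
        subst hl; subst hr
        simp [pairList]
      · cases hsp''
        simp only [connect] at hl hr
        subst hl; subst hr
        simp [pairList]
    · rcases hsp' with _ | ⟨_, hsp''⟩ | ⟨_, hsp''⟩
      · cases hsp''
        simp only [connect] at hl hr
        subst hl; subst hr
        simp [pairList]
      · cases hsp''
        simp only [connect] at hl hr
        subst hl; subst hr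
        simp [pairList]

end PTree


/-- For `k` rooted binary phylogenetic trees with at most `n`
leaves each and an integer `0 ≤ r ≤ k`: the number of cut-subforests of `𝒯`
having exactly `r` components whose roots are internal nodes of the
corresponding tree is at most `C(k,r)·(n−1)^r·(n+1)^(k−r)`, and each such
cut-subforest has at most `4^r·2^(k−r)` bipartites. -/
theorem maximum_agreement_supertree_stmt8
    {α : Type} [DecidableEq α] {k n : ℕ} (𝒯 : Fin k → PTree α)
    (hphylo : ∀ i, (𝒯 i).labelList.Nodup)
    (hbin : ∀ i, PTree.Binary (𝒯 i))
    (hnodeg2 : ∀ i, PTree.NoUnaryNodes (𝒯 i))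
    (hn : ∀ i, (𝒯 i).labelList.length ≤ n) (hn1 : 1 ≤ n)
    (r : ℕ) (hr : r ≤ k) :
    {A : Fin k → Option (PTree α) | PTree.IsCutSubforest 𝒯 A ∧
        {i : Fin k | PTree.InternalRooted (𝒯 i) (A i)}.ncard = r}.ncard
      ≤ k.choose r * (n - 1) ^ r * (n + 1) ^ (k - r) ∧
    ∀ A : Fin k → Option (PTree α), PTree.IsCutSubforest 𝒯 A →
      {i : Fin k | PTree.InternalRooted (𝒯 i) (A i)}.ncard = r →
      {p : (Fin k → Option (PTree α)) × (Fin k → Option (PTree α)) |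
          PTree.IsBipartite A p.1 p.2}.ncard ≤ 4 ^ r * 2 ^ (k - r) := by
  classical
  have hclass : ∀ (A : Fin k → Option (PTree α)), PTree.IsCutSubforest 𝒯 A →
      ∀ i, A i = none ∨ ∃ t, A i = some t ∧ PTree.Subtree t (𝒯 i) := by
    intro A hA i
    rcases h' : A i with _ | t
    · exact Or.inl rfl
    · exact Or.inr ⟨t, rfl, PTree.cut_subtree_some (hbin i) (h' ▸ hA.1 i)⟩
  constructor
  · -- Part 1 : counting cut-subforests
    have hsub : {A : Fin k → Option (PTree α) | PTree.IsCutSubforest 𝒯 A ∧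
        {i : Fin k | PTree.InternalRooted (𝒯 i) (A i)}.ncard = r} ⊆
        ↑((Finset.powersetCard r (Finset.univ : Finset (Fin k))).biUnion
          (fun S => Fintype.piFinset
            (fun i => if i ∈ S then PTree.intCand (𝒯 i) else PTree.extCand (𝒯 i)))) := by
      intro A hA
      obtain ⟨hcf, hcard⟩ := hA
      set S : Finset (Fin k) :=
        Finset.univ.filter (fun i => PTree.InternalRooted (𝒯 i) (A i)) with hSdef
      have hScard : S.card = r := by
        rw [← hcard, ← Set.ncard_coe_finset]
        congr 1
        ext i; simp [hSdef]
      refine Finset.mem_coe.2 (Finset.mem_biUnion.2 ⟨S, ?_, ?_⟩)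
      · rw [Finset.mem_powersetCard]; exact ⟨Finset.subset_univ _, hScard⟩
      · rw [Fintype.mem_piFinset]
        intro i
        by_cases hi : PTree.InternalRooted (𝒯 i) (A i)
        · have hiS : i ∈ S := by simp [hSdef, hi]
          rw [if_pos hiS]
          rcases h' : A i with _ | t
          · rw [h'] at hi; exact absurd hi (by simp [PTree.InternalRooted])
          · rw [h'] at hi
            obtain ⟨⟨ds, rfl⟩, hsub'⟩ := hi
            simp only [PTree.intCand, List.mem_toFinset, List.mem_map]
            exact ⟨_, PTree.mem_nodeSubList hsub' ⟨ds, rfl⟩, rfl⟩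
        · have hiS : i ∉ S := by simp [hSdef, hi]
          rw [if_neg hiS]
          rcases hclass A hcf i with h' | ⟨t, h', hsub'⟩
          · rw [h']; simp [PTree.extCand]
          · rcases t with a | ds
            · rw [h']
              simp only [PTree.extCand, Finset.mem_insert, List.mem_toFinset, List.mem_map]
              exact Or.inr ⟨_, PTree.mem_leafSubList hsub' ⟨a, rfl⟩, rfl⟩
            · exact absurd (show PTree.InternalRooted (𝒯 i) (A i) by
                rw [h']; exact ⟨⟨ds, rfl⟩, hsub'⟩) hi
    refine le_trans (le_trans (Set.ncard_le_ncard hsub (Finset.finite_toSet _))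
      (le_of_eq (Set.ncard_coe_finset _))) ?_
    refine le_trans Finset.card_biUnion_le ?_
    have hbound : ∀ S ∈ Finset.powersetCard r (Finset.univ : Finset (Fin k)),
        (Fintype.piFinset
          (fun i => if i ∈ S then PTree.intCand (𝒯 i) else PTree.extCand (𝒯 i))).card
          ≤ (n - 1) ^ r * (n + 1) ^ (k - r) := by
      intro S hS
      rw [Finset.mem_powersetCard] at hS
      rw [Fintype.card_piFinset]
      have h1 : ∀ i, (if i ∈ S then PTree.intCand (𝒯 i) else PTree.extCand (𝒯 i)).card
          ≤ (if i ∈ S then n - 1 else n + 1) := by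
        intro i
        by_cases hi : i ∈ S
        · rw [if_pos hi, if_pos hi]
          refine le_trans (List.toFinset_card_le _) ?_
          rw [List.length_map]
          have h2 := PTree.nodeSubList_length (𝒯 i) (hbin i)
          have h3 := hn i
          omega
        · rw [if_neg hi, if_neg hi]
          refine le_trans (Finset.card_insert_le _ _) ?_
          have h3 : ((PTree.leafSubList (𝒯 i)).map some).toFinset.card ≤ n := by
            refine le_trans (List.toFinset_card_le _) ?_
            rw [List.length_map, PTree.leafSubList_length]
            exact hn i
          omega
      calc ∏ i, (if i ∈ S then PTree.intCand (𝒯 i) else PTree.extCand (𝒯 i)).card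
          ≤ ∏ i, (if i ∈ S then n - 1 else n + 1) :=
            Finset.prod_le_prod' (fun i _ => h1 i)
        _ = (n - 1) ^ r * (n + 1) ^ (k - r) := by
            rw [← Finset.prod_mul_prod_compl S,
              Finset.prod_congr rfl (fun i hi => if_pos hi),
              Finset.prod_congr rfl (fun i hi => if_neg (Finset.mem_compl.1 hi)),
              Finset.prod_const, Finset.prod_const, Finset.card_compl, Fintype.card_fin, hS.2]
    refine le_trans (Finset.sum_le_card_nsmul _ _ _ hbound) ?_
    rw [Finset.card_powersetCard, Finset.card_univ, Fintype.card_fin, smul_eq_mul, ← mul_assoc]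
  · -- Part 2 : counting bipartites
    intro A hcf hcard
    set S : Finset (Fin k) :=
      Finset.univ.filter (fun i => PTree.InternalRooted (𝒯 i) (A i)) with hSdef
    have hScard : S.card = r := by
      rw [← hcard, ← Set.ncard_coe_finset]
      congr 1
      ext i; simp [hSdef]
    have key := Set.ncard_le_ncard_of_injOn
      (s := {p : (Fin k → Option (PTree α)) × (Fin k → Option (PTree α)) |
          PTree.IsBipartite A p.1 p.2})
      (t := ↑(Fintype.piFinset fun i => (PTree.pairList (A i)).toFinset))
      (fun p => fun i => (p.1 i, p.2 i))
      (by
        intro p hp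
        simp only [Set.mem_setOf_eq] at hp
        refine Finset.mem_coe.2 (Fintype.mem_piFinset.2 fun i => ?_)
        rw [List.mem_toFinset]
        refine PTree.bipartite_mem ?_ (hp i)
        intro cs hcs
        rcases hclass A hcf i with h' | ⟨t, h', hsub'⟩
        · rw [h'] at hcs; cases hcs
        · rw [h'] at hcs
          obtain rfl : t = PTree.node cs := by injection hcs
          exact hbin i cs hsub')
      (by
        intro p _ q _ h
        have h' := congrFun h
        refine Prod.ext ?_ ?_
        · funext i; exact congrArg Prod.fst (h' i)
        · funext i; exact congrArg Prod.snd (h' i))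
      (Finset.finite_toSet _)
    refine le_trans key ?_
    rw [Set.ncard_coe_finset, Fintype.card_piFinset]
    have h1 : ∀ i, ((PTree.pairList (A i)).toFinset).card ≤ (if i ∈ S then 4 else 2) := by
      intro i
      by_cases hi : i ∈ S
      · rw [if_pos hi]
        exact le_trans (List.toFinset_card_le _) (PTree.pairList_length_le _)
      · rw [if_neg hi]
        refine le_trans (List.toFinset_card_le _) ?_
        have hni : ¬ PTree.InternalRooted (𝒯 i) (A i) := by simpa [hSdef] using hi
        rcases hclass A hcf i with h' | ⟨t, h', hsub'⟩
        · rw [h']; simp [PTree.pairList]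
        · rcases t with a | ds
          · rw [h']; simp [PTree.pairList]
          · exact absurd (show PTree.InternalRooted (𝒯 i) (A i) by
              rw [h']; exact ⟨⟨ds, rfl⟩, hsub'⟩) hni
    calc (∏ i, ((PTree.pairList (A i)).toFinset).card)
        ≤ ∏ i, (if i ∈ S then 4 else 2) := Finset.prod_le_prod' (fun i _ => h1 i)
      _ = 4 ^ r * 2 ^ (k - r) := by
          rw [← Finset.prod_mul_prod_compl S,
            Finset.prod_congr rfl (fun i hi => if_pos hi),
            Finset.prod_congr rfl (fun i hi => if_neg (Finset.mem_compl.1 hi)),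
            Finset.prod_const, Finset.prod_const, Finset.card_compl, Fintype.card_fin, hScard]
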